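/- arXiv:2002.04324 — 5 statements merged into one kernel-verified Lean document; each statement's English description precedes it below -/
import Mathlib

section
/- Let n ≥ 1 and let A be a symmetric positive definite real n×n matrix, with q(y) = yᵀAy and α(y) = √(q(y)). If E₀, E₁, E₂, E₃, E₄ are polynomial functions on ℝⁿ such that E₄(y)α(y)⁴ + E₃(y)α(y)³ + E₂(y)α(y)² + E₁(y)α(y) + E₀(y) = 0 for every y ∈ ℝⁿ, then E₄(y)q(y)² + E₂(y)q(y) + E₀(y) = 0 and E₃(y)q(y) + E₁(y) = 0 for every y ∈ ℝⁿ. -/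
open Matrix MvPolynomial

lemma eval_aeval_scale {n : ℕ} (y : Fin n → ℝ) (t : ℝ) (p : MvPolynomial (Fin n) ℝ) :
    Polynomial.eval t (MvPolynomial.aeval (fun i => Polynomial.C (y i) * Polynomial.X) p)
      = MvPolynomial.eval (t • y) p := by
  have h2 := congrArg (fun f => f p) (MvPolynomial.comp_aeval
    (fun i => Polynomial.C (y i) * Polynomial.X) (Polynomial.aeval t (R := ℝ)))
  simp only [AlgHom.comp_apply] at h2
  rw [show ∀ q : Polynomial ℝ, Polynomial.aeval t q = Polynomial.eval t q from
    fun q => Polynomial.aeval_def t q ▸ rfl] at h2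
  rw [h2]
  have he : (fun i => (Polynomial.aeval t) (Polynomial.C (y i) * Polynomial.X)) = t • y := by
    funext i
    rw [Pi.smul_apply, smul_eq_mul, _root_.map_mul, Polynomial.aeval_C, Polynomial.aeval_X]
    simp [mul_comm]
  rw [he]
  rfl

/-- Splitting a quartic identity `E₄α⁴ + E₃α³ + E₂α² + E₁α + E₀ = 0` in the irrational
quantity `α = √q` into its even and odd parts. -/
theorem stmt_1 (n : ℕ) (hn : 1 ≤ n) (A : Matrix (Fin n) (Fin n) ℝ) (hA : A.PosDef)
    (E₀ E₁ E₂ E₃ E₄ : MvPolynomial (Fin n) ℝ)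
    (h : ∀ y : Fin n → ℝ,
      eval y E₄ * Real.sqrt (y ⬝ᵥ A *ᵥ y) ^ 4 +
      eval y E₃ * Real.sqrt (y ⬝ᵥ A *ᵥ y) ^ 3 +
      eval y E₂ * Real.sqrt (y ⬝ᵥ A *ᵥ y) ^ 2 +
      eval y E₁ * Real.sqrt (y ⬝ᵥ A *ᵥ y) + eval y E₀ = 0) :
    (∀ y : Fin n → ℝ,
      eval y E₄ * (y ⬝ᵥ A *ᵥ y) ^ 2 + eval y E₂ * (y ⬝ᵥ A *ᵥ y) + eval y E₀ = 0) ∧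
    (∀ y : Fin n → ℝ, eval y E₃ * (y ⬝ᵥ A *ᵥ y) + eval y E₁ = 0) := by
  have main : ∀ y : Fin n → ℝ, y ≠ 0 → ∀ t : ℝ,
      (eval (t • y) E₄ * ((t • y) ⬝ᵥ A *ᵥ (t • y)) ^ 2 + eval (t • y) E₂ * ((t • y) ⬝ᵥ A *ᵥ (t • y))
        + eval (t • y) E₀ = 0) ∧
      (eval (t • y) E₃ * ((t • y) ⬝ᵥ A *ᵥ (t • y)) + eval (t • y) E₁ = 0) := by
    intro y hy
    set qy : ℝ := y ⬝ᵥ A *ᵥ y with hqy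
    have hq : 0 < qy := by
      have := hA.dotProduct_mulVec_pos hy
      simpa using this
    set c : ℝ := Real.sqrt qy with hcdef
    have hc : 0 < c := Real.sqrt_pos.mpr hq
    have hce : c ^ 2 = qy := Real.sq_sqrt hq.le
    have hscale : ∀ t : ℝ, (t • y) ⬝ᵥ A *ᵥ (t • y) = t ^ 2 * qy := by
      intro t
      rw [Matrix.mulVec_smul, dotProduct_smul, smul_dotProduct]
      simp only [smul_eq_mul, hqy]; ring
    have hα : ∀ t : ℝ, Real.sqrt ((t • y) ⬝ᵥ A *ᵥ (t • y)) = |t| * c := by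
      intro t
      rw [hscale, Real.sqrt_mul (sq_nonneg t), Real.sqrt_sq_eq_abs]
    set s : MvPolynomial (Fin n) ℝ →ₐ[ℝ] Polynomial ℝ :=
      MvPolynomial.aeval (fun i => Polynomial.C (y i) * Polynomial.X) with hs
    set pF : Polynomial ℝ :=
      s E₄ * Polynomial.C (qy ^ 2) * Polynomial.X ^ 4 + s E₂ * Polynomial.C qy * Polynomial.X ^ 2
        + s E₀ with hpF
    set pG : Polynomial ℝ := s E₃ * Polynomial.C qy * Polynomial.X ^ 2 + s E₁ with hpG
    have hevalF : ∀ t : ℝ, Polynomial.eval t pF =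
        eval (t • y) E₄ * (t ^ 2 * qy) ^ 2 + eval (t • y) E₂ * (t ^ 2 * qy) + eval (t • y) E₀ := by
      intro t
      simp only [hpF, hs, Polynomial.eval_add, Polynomial.eval_mul, Polynomial.eval_C,
        Polynomial.eval_pow, Polynomial.eval_X, eval_aeval_scale]
      ring
    have hevalG : ∀ t : ℝ, Polynomial.eval t pG =
        eval (t • y) E₃ * (t ^ 2 * qy) + eval (t • y) E₁ := by
      intro t
      simp only [hpG, hs, Polynomial.eval_add, Polynomial.eval_mul, Polynomial.eval_C,
        Polynomial.eval_pow, Polynomial.eval_X, eval_aeval_scale]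
      ring
    have hcomb : ∀ t : ℝ,
        Polynomial.eval t pF + (|t| * c) * Polynomial.eval t pG = 0 := by
      intro t
      have ht := h (t • y)
      rw [hα t] at ht
      have habs : (|t| : ℝ) ^ 2 = t ^ 2 := sq_abs t
      calc Polynomial.eval t pF + (|t| * c) * Polynomial.eval t pG
          = eval (t • y) E₄ * (t ^ 2 * qy) ^ 2 + eval (t • y) E₂ * (t ^ 2 * qy)
              + eval (t • y) E₀
            + (|t| * c) * (eval (t • y) E₃ * (t ^ 2 * qy) + eval (t • y) E₁) := by
              rw [hevalF, hevalG]
        _ = eval (t • y) E₄ * (|t| * c) ^ 4 + eval (t • y) E₃ * (|t| * c) ^ 3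
              + eval (t • y) E₂ * (|t| * c) ^ 2 + eval (t • y) E₁ * (|t| * c)
              + eval (t • y) E₀ := by
              rw [← hce, ← habs]; ring
        _ = 0 := ht
    have h1 : pF + Polynomial.C c * Polynomial.X * pG = 0 := by
      apply Polynomial.eq_zero_of_infinite_isRoot
      apply Set.Infinite.mono (s := Set.Ioi (0:ℝ)) _ (Set.Ioi_infinite 0)
      intro t ht
      have ht' : |t| = t := abs_of_pos ht
      have hct := hcomb t
      simp only [Polynomial.IsRoot, Polynomial.eval_add, Polynomial.eval_mul,
        Polynomial.eval_C, Polynomial.eval_X, Set.mem_setOf_eq]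
      rw [ht'] at hct
      linarith [hct]
    have h2 : pF - Polynomial.C c * Polynomial.X * pG = 0 := by
      apply Polynomial.eq_zero_of_infinite_isRoot
      apply Set.Infinite.mono (s := Set.Iio (0:ℝ)) _ (Set.Iio_infinite 0)
      intro t ht
      have ht' : |t| = -t := abs_of_neg ht
      have hct := hcomb t
      simp only [Polynomial.IsRoot, Polynomial.eval_sub, Polynomial.eval_mul,
        Polynomial.eval_C, Polynomial.eval_X, Set.mem_setOf_eq]
      rw [ht'] at hct
      linarith [hct]
    have hF0 : pF = 0 := by
      have h2pf : (2 : Polynomial ℝ) * pF = 0 := by linear_combination h1 + h2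
      exact (mul_eq_zero.mp h2pf).resolve_left two_ne_zero
    have hG0 : pG = 0 := by
      have hx : (2 : Polynomial ℝ) * (Polynomial.C c * Polynomial.X * pG) = 0 := by
        linear_combination h1 - h2
      have hx2 := (mul_eq_zero.mp hx).resolve_left two_ne_zero
      rcases mul_eq_zero.mp hx2 with h' | h'
      · exfalso
        rcases mul_eq_zero.mp h' with h'' | h''
        · exact hc.ne' (by simpa [Polynomial.C_eq_zero] using h'')
        · exact Polynomial.X_ne_zero h''
      · exact h'
    intro t
    constructor
    · have hft := hevalF t
      rw [hF0] at hft
      simp only [Polynomial.eval_zero] at hft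
      rw [hscale t]
      linarith [hft]
    · have hgt := hevalG t
      rw [hG0] at hgt
      simp only [Polynomial.eval_zero] at hgt
      rw [hscale t]
      linarith [hgt]
  constructor
  · intro y
    by_cases hy : y = 0
    · have h0 := (main (fun _ => 1) (by
        intro hcon
        have := congrFun hcon ⟨0, hn⟩
        simp at this) 0).1
      simpa [hy] using h0
    · simpa using (main y hy 1).1
  · intro y
    by_cases hy : y = 0
    · have h0 := (main (fun _ => 1) (by
        intro hcon
        have := congrFun hcon ⟨0, hn⟩
        simp at this) 0).2
      simpa [hy] using h0
    · simpa using (main y hy 1).2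
end

section
/- Let n ≥ 2 and let A be a symmetric positive definite real n×n matrix with q(y) = yᵀAy, and let b ∈ ℝⁿ be nonzero with β(y) = ∑_i b_i y_i. Suppose E₄ and E₂ are polynomial functions on ℝⁿ and T is a quadratic form on ℝⁿ (T(y) = yᵀBy for some symmetric real matrix B) such that (E₄(y)q(y) + E₂(y))·q(y) + T(y)·β(y)² = 0 for every y ∈ ℝⁿ. Then there exists λ ∈ ℝ such that T(y) = λ·q(y) for all y, and E₄(y)q(y) + E₂(y) + λ·β(y)² = 0 for every y ∈ ℝⁿ. -/
open Matrix MvPolynomial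

private lemma eval_quadPoly {n : ℕ} (M : Matrix (Fin n) (Fin n) ℝ) (y : Fin n → ℝ) :
    eval y (∑ i, ∑ j, C (M i j) * X i * X j) = y ⬝ᵥ M *ᵥ y := by
  simp only [map_sum, _root_.map_mul, eval_C, eval_X, dotProduct, mulVec, Finset.mul_sum]
  exact Finset.sum_congr rfl fun i _ => Finset.sum_congr rfl fun j _ => by ring

private lemma eval_linPoly {n : ℕ} (b : Fin n → ℝ) (y : Fin n → ℝ) :
    eval y (∑ i, C (b i) * X i) = b ⬝ᵥ y := by
  simp [dotProduct]

private lemma quad_smul {n : ℕ} (M : Matrix (Fin n) (Fin n) ℝ) (t : ℝ) (y : Fin n → ℝ) :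
    (t • y) ⬝ᵥ M *ᵥ (t • y) = t ^ 2 * (y ⬝ᵥ M *ᵥ y) := by
  rw [Matrix.mulVec_smul, smul_dotProduct, dotProduct_smul,
    smul_eq_mul, smul_eq_mul]
  ring

private lemma prime_linPoly {m : ℕ} (b : Fin (m+1) → ℝ) (i₀ : Fin (m+1)) (hb : b i₀ ≠ 0) :
    Prime (∑ i, C (b i) * X i : MvPolynomial (Fin (m+1)) ℝ) := by
  set e : Equiv.Perm (Fin (m+1)) := Equiv.swap 0 i₀ with he
  set ψ : MvPolynomial (Fin (m+1)) ℝ ≃ₐ[ℝ] Polynomial (MvPolynomial (Fin m) ℝ) :=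
    (renameEquiv ℝ e).trans (MvPolynomial.finSuccEquiv ℝ m) with hψ
  have hψX : ∀ i : Fin (m+1), ψ (X i) = MvPolynomial.finSuccEquiv ℝ m (X (e i)) := by
    intro i; simp [hψ, renameEquiv_apply]
  have hψC : ∀ r : ℝ, ψ (MvPolynomial.C r) = Polynomial.C (MvPolynomial.C r) := by
    intro r
    simp [hψ, renameEquiv_apply, rename_C, MvPolynomial.finSuccEquiv_apply]
  have hconst : ∀ i : Fin (m+1), i ≠ i₀ →
      ψ (X i) = Polynomial.C ((ψ (X i)).coeff 0) := by
    intro i hi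
    have hei : e i ≠ 0 := by
      intro hzero
      exact hi (e.injective (hzero.trans (Equiv.swap_apply_right 0 i₀).symm))
    rcases Fin.eq_zero_or_eq_succ (e i) with h0 | ⟨j, hj⟩
    · exact absurd h0 hei
    · rw [hψX, hj, finSuccEquiv_X_succ, Polynomial.coeff_C_zero]
  have hsum : ψ (∑ i, C (b i) * X i)
      = Polynomial.C (MvPolynomial.C (b i₀)) * Polynomial.X
        + Polynomial.C (∑ i ∈ Finset.univ.erase i₀,
            MvPolynomial.C (b i) * (ψ (X i)).coeff 0) := by
    rw [map_sum, ← Finset.add_sum_erase _ _ (Finset.mem_univ i₀)]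
    congr 1
    · rw [_root_.map_mul, hψC, hψX, Equiv.swap_apply_right, finSuccEquiv_X_zero]
    · rw [map_sum]
      refine Finset.sum_congr rfl fun i hi => ?_
      rw [_root_.map_mul, hψC]
      conv_lhs => rw [hconst i (Finset.ne_of_mem_erase hi)]
      rw [Polynomial.C_mul]
  set c' : MvPolynomial (Fin m) ℝ := ∑ i ∈ Finset.univ.erase i₀,
      MvPolynomial.C (b i) * (ψ (X i)).coeff 0 with hc'
  have hu : IsUnit (Polynomial.C (MvPolynomial.C (b i₀)) :
      Polynomial (MvPolynomial (Fin m) ℝ)) :=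
    ((isUnit_iff_ne_zero.mpr hb).map MvPolynomial.C).map Polynomial.C
  have hCC : Polynomial.C (MvPolynomial.C (b i₀)) *
      Polynomial.C (MvPolynomial.C (b i₀)⁻¹ * c') = Polynomial.C c' := by
    rw [← Polynomial.C_mul, ← mul_assoc, ← MvPolynomial.C_mul, mul_inv_cancel₀ hb,
      MvPolynomial.C_1, one_mul]
  have hfac : ψ (∑ i, C (b i) * X i)
      = Polynomial.C (MvPolynomial.C (b i₀)) *
        (Polynomial.X - Polynomial.C (-(MvPolynomial.C (b i₀)⁻¹ * c'))) := by
    simp only [hsum, Polynomial.C_neg, mul_sub, mul_neg, sub_neg_eq_add, mul_add, hCC]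
  have hprime : Prime (ψ (∑ i, C (b i) * X i)) := by
    rw [hfac]
    exact ((associated_unit_mul_left _ _ hu).symm.prime (Polynomial.prime_X_sub_C _))
  exact (MulEquiv.prime_iff ψ).mp hprime

/-- The combined step (3.18)–(3.20): from `(E₄ q + E₂)·q + T·β² = 0` with `T` a quadratic
form and `β` a nonzero linear form, deduce `T = λ q` and `E₄ q + E₂ + λ β² = 0`. -/
theorem stmt_6 (n : ℕ) (hn : 2 ≤ n) (A : Matrix (Fin n) (Fin n) ℝ) (hA : A.PosDef)
    (b : Fin n → ℝ) (hb : b ≠ 0)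
    (E₄ E₂ : MvPolynomial (Fin n) ℝ)
    (B : Matrix (Fin n) (Fin n) ℝ) (hB : B.IsSymm)
    (h : ∀ y : Fin n → ℝ,
      (eval y E₄ * (y ⬝ᵥ A *ᵥ y) + eval y E₂) * (y ⬝ᵥ A *ᵥ y) +
        (y ⬝ᵥ B *ᵥ y) * (b ⬝ᵥ y) ^ 2 = 0) :
    ∃ l : ℝ, (∀ y : Fin n → ℝ, y ⬝ᵥ B *ᵥ y = l * (y ⬝ᵥ A *ᵥ y)) ∧
      (∀ y : Fin n → ℝ,
        eval y E₄ * (y ⬝ᵥ A *ᵥ y) + eval y E₂ + l * (b ⬝ᵥ y) ^ 2 = 0) := by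
  classical
  obtain ⟨m, rfl⟩ : ∃ m, n = m + 2 := ⟨n - 2, by omega⟩
  obtain ⟨i₀, hbi⟩ : ∃ i, b i ≠ 0 := by
    by_contra hc; push_neg at hc; exact hb (funext hc)
  set qp : MvPolynomial (Fin (m+2)) ℝ := ∑ i, ∑ j, C (A i j) * X i * X j with hqp
  set Tp : MvPolynomial (Fin (m+2)) ℝ := ∑ i, ∑ j, C (B i j) * X i * X j with hTp
  set βp : MvPolynomial (Fin (m+2)) ℝ := ∑ i, C (b i) * X i with hβp
  have hqpos : ∀ y : Fin (m+2) → ℝ, y ≠ 0 → 0 < y ⬝ᵥ A *ᵥ y := by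
    intro y hy
    simpa using hA.dotProduct_mulVec_pos hy
  have hpoly : (E₄ * qp + E₂) * qp + Tp * βp ^ 2 = 0 := by
    apply MvPolynomial.funext
    intro y
    simp only [map_add, _root_.map_mul, map_pow, eval_quadPoly, eval_linPoly, map_zero,
      hqp, hTp, hβp]
    exact h y
  have hprime : Prime βp := prime_linPoly b i₀ hbi
  have hβ0 : βp ≠ 0 := hprime.ne_zero
  -- βp does not divide qp
  have hnotdvd : ¬ βp ∣ qp := by
    rintro ⟨g, hg⟩
    obtain ⟨j, hj⟩ : ∃ j, j ≠ i₀ := exists_ne i₀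
    set y : Fin (m+2) → ℝ := fun k => if k = i₀ then b j else if k = j then -(b i₀) else 0
      with hy
    have hyne : y ≠ 0 := by
      intro h0
      have : y j = 0 := by rw [h0]; rfl
      rw [hy] at this
      simp [hj] at this
      exact hbi this
    have hby : b ⬝ᵥ y = 0 := by
      have hterm : ∀ k, b k * y k =
          (if k = i₀ then b i₀ * b j else 0) + (if k = j then -(b j * b i₀) else 0) := by
        intro k
        simp only [hy]
        by_cases h1 : k = i₀
        · have h2 : k ≠ j := fun hh => hj (hh.symm.trans h1)
          rw [if_pos h1, if_pos h1, if_neg h2, h1]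
          ring
        · by_cases h2 : k = j
          · rw [if_neg h1, if_pos h2, if_neg h1, if_pos h2, h2]
            ring
          · rw [if_neg h1, if_neg h2, if_neg h1, if_neg h2]
            ring
      simp only [dotProduct, hterm, Finset.sum_add_distrib, Finset.sum_ite_eq',
        Finset.mem_univ, if_true]
      ring
    have h1 : eval y qp = 0 := by
      rw [hg, _root_.map_mul]
      have : eval y βp = 0 := by rw [hβp, eval_linPoly, hby]
      rw [this, zero_mul]
    have h2 : eval y qp = y ⬝ᵥ A *ᵥ y := by rw [hqp]; exact eval_quadPoly A y
    have := hqpos y hyne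
    rw [← h2, h1] at this
    exact lt_irrefl 0 this
  -- first division
  have hd1 : βp ∣ (E₄ * qp + E₂) := by
    have hdvd : βp ∣ (E₄ * qp + E₂) * qp := ⟨-(Tp * βp), by linear_combination hpoly⟩
    exact (hprime.dvd_or_dvd hdvd).resolve_right hnotdvd
  obtain ⟨P₁, hP₁⟩ := hd1
  have hpoly1 : P₁ * qp + Tp * βp = 0 := by
    have : βp * (P₁ * qp + Tp * βp) = 0 := by
      rw [hP₁] at hpoly; linear_combination hpoly
    rcases mul_eq_zero.mp this with h' | h'
    · exact absurd h' hβ0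
    · exact h'
  -- second division
  have hd2 : βp ∣ P₁ := by
    have hdvd : βp ∣ P₁ * qp := ⟨-Tp, by linear_combination hpoly1⟩
    exact (hprime.dvd_or_dvd hdvd).resolve_right hnotdvd
  obtain ⟨P₂, hP₂⟩ := hd2
  have hpoly2 : P₂ * qp + Tp = 0 := by
    have : βp * (P₂ * qp + Tp) = 0 := by
      rw [hP₂] at hpoly1; linear_combination hpoly1
    rcases mul_eq_zero.mp this with h' | h'
    · exact absurd h' hβ0
    · exact h'
  -- evaluated identities
  have heT : ∀ y : Fin (m+2) → ℝ, y ⬝ᵥ B *ᵥ y = -(eval y P₂ * (y ⬝ᵥ A *ᵥ y)) := by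
    intro y
    have := congrArg (eval y) hpoly2
    simp only [map_add, _root_.map_mul, map_zero, hqp, hTp, eval_quadPoly] at this
    linarith
  have heP : ∀ y : Fin (m+2) → ℝ,
      eval y E₄ * (y ⬝ᵥ A *ᵥ y) + eval y E₂ = (b ⬝ᵥ y) ^ 2 * eval y P₂ := by
    intro y
    have h' : E₄ * qp + E₂ = βp ^ 2 * P₂ := by rw [hP₁, hP₂]; ring
    have := congrArg (eval y) h'
    simpa only [map_add, _root_.map_mul, map_pow, hqp, hβp, eval_quadPoly, eval_linPoly]
      using this
  -- P₂ is constant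
  have hc : ∀ y : Fin (m+2) → ℝ, eval y P₂ = eval (0 : Fin (m+2) → ℝ) P₂ := by
    intro y
    by_cases hy : y = 0
    · rw [hy]
    · have hq : 0 < y ⬝ᵥ A *ᵥ y := hqpos y hy
      have hstep : ∀ t : ℝ, t ≠ 0 → eval (t • y) P₂ = eval y P₂ := by
        intro t ht
        have h1 := heT (t • y)
        rw [quad_smul A t y, quad_smul B t y] at h1
        have h2 := heT y
        have hcancel : eval (t • y) P₂ * (y ⬝ᵥ A *ᵥ y) = eval y P₂ * (y ⬝ᵥ A *ᵥ y) := by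
          have ht2 : (t : ℝ) ^ 2 ≠ 0 := pow_ne_zero 2 ht
          apply mul_left_cancel₀ ht2
          linear_combination h1 - t ^ 2 * h2
        exact mul_right_cancel₀ (ne_of_gt hq) hcancel
      set p : Polynomial ℝ :=
        eval₂ (Polynomial.C : ℝ →+* Polynomial ℝ)
          (fun i => Polynomial.C (y i) * Polynomial.X) P₂ with hp
      have heval : ∀ t : ℝ, Polynomial.eval t p = eval (t • y) P₂ := by
        intro t
        have h3 := MvPolynomial.eval₂_comp_left (Polynomial.evalRingHom t)
          (Polynomial.C : ℝ →+* Polynomial ℝ)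
          (fun i => Polynomial.C (y i) * Polynomial.X) P₂
        have h1 : (Polynomial.evalRingHom t).comp (Polynomial.C : ℝ →+* Polynomial ℝ)
            = RingHom.id ℝ := by
          ext r; simp
        have h2 : ((Polynomial.evalRingHom t) ∘
            (fun i : Fin (m+2) => Polynomial.C (y i) * Polynomial.X)) = fun i => t * y i := by
          funext i
          show Polynomial.eval t (Polynomial.C (y i) * Polynomial.X) = t * y i
          rw [Polynomial.eval_mul, Polynomial.eval_C, Polynomial.eval_X]
          ring
        rw [h1, h2] at h3
        calc Polynomial.eval t p
            = Polynomial.evalRingHom t (eval₂ (Polynomial.C : ℝ →+* Polynomial ℝ)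
              (fun i => Polynomial.C (y i) * Polynomial.X) P₂) := rfl
          _ = eval₂ (RingHom.id ℝ) (fun i => t * y i) P₂ := h3
          _ = eval (t • y) P₂ := rfl
      have hconstp : p = Polynomial.C (eval y P₂) := by
        have hzero : p - Polynomial.C (eval y P₂) = 0 := by
          apply Polynomial.eq_zero_of_infinite_isRoot
          apply Set.Infinite.mono (s := {t : ℝ | t ≠ 0})
          · intro t ht
            simp only [Set.mem_setOf_eq, Polynomial.IsRoot, Polynomial.eval_sub,
              Polynomial.eval_C]
            rw [heval t, hstep t ht, sub_self]
          · exact (Set.finite_singleton (0 : ℝ)).infinite_compl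
        linear_combination hzero
      have h0 : Polynomial.eval 0 p = eval (0 : Fin (m+2) → ℝ) P₂ := by
        rw [heval 0, zero_smul]
      rw [hconstp, Polynomial.eval_C] at h0
      exact h0
  refine ⟨-(eval (0 : Fin (m+2) → ℝ) P₂), fun y => ?_, fun y => ?_⟩
  · rw [heT y, hc y]; ring
  · rw [heP y, hc y]; ring
end

section
/- Let n ≥ 2, let A be a symmetric positive definite real n×n matrix, and let α(y) = √(yᵀAy). If L is a linear form on ℝⁿ and there exists a polynomial function p on ℝⁿ such that L(y)·α(y) = p(y) for every y ∈ ℝⁿ, then L is identically zero. -/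
open Matrix MvPolynomial

/-- Irrationality lemma: if `L(y)·α(y)` is a polynomial function of `y`, where `L` is a
linear form and `α` the norm of a symmetric positive definite matrix (`n ≥ 2`), then `L`
is identically zero. -/
theorem stmt_13 (n : ℕ) (hn : 2 ≤ n) (A : Matrix (Fin n) (Fin n) ℝ) (hA : A.PosDef)
    (c : Fin n → ℝ) (p : MvPolynomial (Fin n) ℝ)
    (h : ∀ y : Fin n → ℝ, (c ⬝ᵥ y) * Real.sqrt (y ⬝ᵥ A *ᵥ y) = eval y p) :
    ∀ y : Fin n → ℝ, c ⬝ᵥ y = 0 := by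
  intro y
  by_contra hcy
  have hy0 : y ≠ 0 := by
    rintro rfl
    exact hcy (dotProduct_zero c)
  have hq : 0 < y ⬝ᵥ A *ᵥ y := by
    have := hA.dotProduct_mulVec_pos hy0
    simpa using this
  set a : ℝ := (c ⬝ᵥ y) * Real.sqrt (y ⬝ᵥ A *ᵥ y) with ha
  have ha0 : a ≠ 0 := mul_ne_zero hcy (ne_of_gt (Real.sqrt_pos.mpr hq))
  -- the one-variable polynomial t ↦ q (t • y)
  have hgen : ∀ (q : MvPolynomial (Fin n) ℝ) (t : ℝ),
      Polynomial.eval t (MvPolynomial.aeval (fun i => Polynomial.C (y i) * Polynomial.X) q)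
        = eval (t • y) q := by
    intro q t
    induction q using MvPolynomial.induction_on with
    | C a => simp
    | add q r hq hr =>
        rw [_root_.map_add, Polynomial.eval_add, hq, hr, _root_.map_add]
    | mul_X q i hq =>
        rw [_root_.map_mul, Polynomial.eval_mul, hq, MvPolynomial.aeval_X,
          Polynomial.eval_mul, Polynomial.eval_C, Polynomial.eval_X]
        simp [Pi.smul_apply, smul_eq_mul, mul_comm]
  set P : Polynomial ℝ :=
    MvPolynomial.aeval (fun i => Polynomial.C (y i) * Polynomial.X) p with hP
  have hPeval : ∀ t : ℝ, P.eval t = eval (t • y) p := fun t => hgen p t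
  have key : ∀ t : ℝ, P.eval t = a * (t * |t|) := by
    intro t
    have h1 := h (t • y)
    have h2 : c ⬝ᵥ (t • y) = t * (c ⬝ᵥ y) := by
      rw [dotProduct_smul]; rfl
    have h3 : (t • y) ⬝ᵥ A *ᵥ (t • y) = t ^ 2 * (y ⬝ᵥ A *ᵥ y) := by
      rw [mulVec_smul, smul_dotProduct, dotProduct_smul]
      simp [smul_eq_mul]
      ring
    rw [h2, h3] at h1
    rw [hPeval, ← h1, Real.sqrt_mul (sq_nonneg t), Real.sqrt_sq_eq_abs]
    ring
  have hpos : P - Polynomial.C a * Polynomial.X ^ 2 = 0 := by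
    refine Polynomial.eq_zero_of_infinite_isRoot _ ((Set.Ici_infinite (0:ℝ)).mono ?_)
    intro t ht
    simp only [Set.mem_setOf_eq, Polynomial.IsRoot, Polynomial.eval_sub,
      Polynomial.eval_mul, Polynomial.eval_pow, Polynomial.eval_C, Polynomial.eval_X]
    rw [key t, abs_of_nonneg ht]
    ring
  have hneg : P + Polynomial.C a * Polynomial.X ^ 2 = 0 := by
    refine Polynomial.eq_zero_of_infinite_isRoot _ ((Set.Iic_infinite (0:ℝ)).mono ?_)
    intro t ht
    simp only [Set.mem_setOf_eq, Polynomial.IsRoot, Polynomial.eval_add,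
      Polynomial.eval_mul, Polynomial.eval_pow, Polynomial.eval_C, Polynomial.eval_X]
    rw [key t, abs_of_nonpos ht]
    ring
  have : (2 : ℝ) * a = 0 := by
    have h4 : (P + Polynomial.C a * Polynomial.X ^ 2)
        - (P - Polynomial.C a * Polynomial.X ^ 2) = 0 := by rw [hpos, hneg]; ring
    have h5 : Polynomial.C a * Polynomial.X ^ 2 * 2 = 0 := by
      rw [← h4]; ring
    have := congrArg (Polynomial.eval 1) h5
    simpa using this
  have : a = 0 := by linarith
  exact ha0 this
end

section
/- Let n ≥ 2, let A be a symmetric positive definite real n×n matrix, let b ∈ ℝⁿ, and set α(y) = √(yᵀAy), β(y) = ∑_i b_i y_i, and F = α + β. Let c₀ be a linear form on ℝⁿ and c ∈ ℝ. If all third partial derivatives ∂³/∂yʲ∂yᵏ∂yˡ of the function y ↦ c₀(y)·F(y) + c²·F(y)² vanish at every y ≠ 0, then c₀(y) = −2c²·β(y) for all y ∈ ℝⁿ; in particular, if c₀ = 0 and b ≠ 0, then c = 0. -/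
open Matrix

section Helpers

variable {E : Type*} [NormedAddCommGroup E] [NormedSpace ℝ E]

private lemma fderiv_comp_neg' (f : E → ℝ) (y : E) (hf : DifferentiableAt ℝ f (-y)) :
    fderiv ℝ (fun w => f (-w)) y = -(fderiv ℝ f (-y)) := by
  have h1 : HasFDerivAt (fun w : E => -w) (-(ContinuousLinearMap.id ℝ E)) y :=
    (hasFDerivAt_id y).neg
  have h2 : HasFDerivAt (fun w => f (-w))
      ((fderiv ℝ f (-y)).comp (-(ContinuousLinearMap.id ℝ E))) y :=
    hf.hasFDerivAt.comp y h1
  rw [h2.fderiv]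
  ext u
  simp

private lemma fderiv_odd_eq' {f : E → ℝ} {y : E}
    (hodd : (fun w => f (-w)) =ᶠ[nhds y] fun w => -f w)
    (hf : DifferentiableAt ℝ f (-y)) :
    fderiv ℝ f y = fderiv ℝ f (-y) := by
  have h1 := fderiv_comp_neg' f y hf
  have h2 : fderiv ℝ (fun w => f (-w)) y = fderiv ℝ (fun w => -f w) y := hodd.fderiv_eq
  have h3 : -(fderiv ℝ f (-y)) = -(fderiv ℝ f y) := by
    rw [← h1, h2, fderiv_fun_neg]
  exact (neg_inj.mp h3).symm

private lemma fderiv_even_eq' {f : E → ℝ} {y : E}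
    (heven : (fun w => f (-w)) =ᶠ[nhds y] f)
    (hf : DifferentiableAt ℝ f (-y)) :
    fderiv ℝ f y = -(fderiv ℝ f (-y)) := by
  rw [← heven.fderiv_eq]
  exact fderiv_comp_neg' f y hf

private lemma const_of_fderiv_zero_on {s : Set E} (hs : IsOpen s) (hsc : IsPreconnected s)
    {g : E → ℝ} (hdiff : ∀ x ∈ s, DifferentiableAt ℝ g x)
    (hz : ∀ x ∈ s, fderiv ℝ g x = 0) {x y : E} (hx : x ∈ s) (hy : y ∈ s) :
    g x = g y := by
  haveI := Subtype.preconnectedSpace hsc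
  have hlc : IsLocallyConstant (fun p : s => g p) := by
    rw [IsLocallyConstant.iff_exists_open]
    rintro ⟨z, hzs⟩
    obtain ⟨ε, hε, hball⟩ := Metric.isOpen_iff.1 hs z hzs
    refine ⟨Subtype.val ⁻¹' Metric.ball z ε,
      Metric.isOpen_ball.preimage continuous_subtype_val, by simpa using hε, ?_⟩
    rintro ⟨w, hws⟩ hwball
    exact (convex_ball z ε).is_const_of_fderivWithin_eq_zero
      (fun u hu => (hdiff u (hball hu)).differentiableWithinAt)
      (fun u hu => by
        rw [fderivWithin_of_isOpen Metric.isOpen_ball hu]; exact hz u (hball hu))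
      hwball (Metric.mem_ball_self hε)
  exact hlc.apply_eq_of_isPreconnected isPreconnected_univ (Set.mem_univ ⟨x, hx⟩)
    (Set.mem_univ ⟨y, hy⟩)

private lemma clm_zero_of_single {n : ℕ} (f : (Fin n → ℝ) →L[ℝ] ℝ)
    (h : ∀ i, f (Pi.single i 1) = 0) : f = 0 := by
  ext v
  have hv : v = ∑ i, v i • (Pi.single i (1 : ℝ) : Fin n → ℝ) := by
    funext j
    simp [Finset.sum_apply, Pi.single_apply]
  rw [hv]
  simp [h]

private lemma contDiff_dotProduct {n : ℕ} {N : WithTop ℕ∞} (v : Fin n → ℝ) :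
    ContDiff ℝ N fun y : Fin n → ℝ => v ⬝ᵥ y := by
  simp only [dotProduct]
  exact ContDiff.sum fun i _ => contDiff_const.mul (contDiff_apply ℝ ℝ i)

private lemma contDiff_quadForm {n : ℕ} {N : WithTop ℕ∞} (A : Matrix (Fin n) (Fin n) ℝ) :
    ContDiff ℝ N fun y : Fin n → ℝ => y ⬝ᵥ A *ᵥ y := by
  simp only [dotProduct, mulVec]
  exact ContDiff.sum fun i _ => (contDiff_apply ℝ ℝ i).mul
    (ContDiff.sum fun j _ => contDiff_const.mul (contDiff_apply ℝ ℝ j))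

end Helpers

/-- Analytic core of Theorem 3.2: if all third partial derivatives of
`y ↦ c₀(y)·F(y) + c²·F(y)²` vanish for `y ≠ 0`, where `F = α + β` is a Randers-type
function, then `c₀ = −2c²β`; in particular, if `c₀ = 0` and `b ≠ 0`, then `c = 0`. -/
theorem stmt_14 (n : ℕ) (hn : 2 ≤ n) (A : Matrix (Fin n) (Fin n) ℝ) (hA : A.PosDef)
    (b : Fin n → ℝ) (c₀ : Fin n → ℝ) (c : ℝ)
    (h : ∀ y : Fin n → ℝ, y ≠ 0 → ∀ j k l : Fin n,
      fderiv ℝ (fun z : Fin n → ℝ =>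
          fderiv ℝ (fun w : Fin n → ℝ =>
              fderiv ℝ (fun v : Fin n → ℝ =>
                  (c₀ ⬝ᵥ v) * (Real.sqrt (v ⬝ᵥ A *ᵥ v) + b ⬝ᵥ v) +
                    c ^ 2 * (Real.sqrt (v ⬝ᵥ A *ᵥ v) + b ⬝ᵥ v) ^ 2)
                w (Pi.single l 1))
            z (Pi.single k 1))
        y (Pi.single j 1) = 0) :
    (∀ y : Fin n → ℝ, c₀ ⬝ᵥ y = -2 * c ^ 2 * (b ⬝ᵥ y)) ∧
      ((∀ y : Fin n → ℝ, c₀ ⬝ᵥ y = 0) → b ≠ 0 → c = 0) := by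
  classical
  set G : (Fin n → ℝ) → ℝ := fun v =>
    (c₀ ⬝ᵥ v) * (Real.sqrt (v ⬝ᵥ A *ᵥ v) + b ⬝ᵥ v) +
      c ^ 2 * (Real.sqrt (v ⬝ᵥ A *ᵥ v) + b ⬝ᵥ v) ^ 2 with hG
  set L : Fin n → ℝ := fun i => c₀ i + 2 * c ^ 2 * b i with hLdef
  set Hf : (Fin n → ℝ) → ℝ := fun v => (L ⬝ᵥ v) * Real.sqrt (v ⬝ᵥ A *ᵥ v) with hHf
  set Qf : (Fin n → ℝ) → ℝ := fun v =>
    (c₀ ⬝ᵥ v) * (b ⬝ᵥ v) + c ^ 2 * ((v ⬝ᵥ A *ᵥ v) + (b ⬝ᵥ v) ^ 2) with hQf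
  -- positivity of the quadratic form
  have hqpos : ∀ y : Fin n → ℝ, y ≠ 0 → 0 < y ⬝ᵥ A *ᵥ y := by
    intro y hy
    have := hA.dotProduct_mulVec_pos hy
    simpa using this
  have hqnn : ∀ y : Fin n → ℝ, 0 ≤ y ⬝ᵥ A *ᵥ y := by
    intro y
    rcases eq_or_ne y 0 with rfl | hy
    · simp
    · exact (hqpos y hy).le
  have hLdot : ∀ v : Fin n → ℝ, L ⬝ᵥ v = c₀ ⬝ᵥ v + 2 * c ^ 2 * (b ⬝ᵥ v) := by
    intro v
    simp only [hLdef, dotProduct, add_mul, Finset.sum_add_distrib, Finset.mul_sum, mul_assoc]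
  have hsplit : ∀ v, G v = Hf v + Qf v := by
    intro v
    have hs : Real.sqrt (v ⬝ᵥ A *ᵥ v) ^ 2 = v ⬝ᵥ A *ᵥ v := Real.sq_sqrt (hqnn v)
    simp only [hG, hHf, hQf, hLdot v]
    nlinarith [hs]
  -- smoothness
  have hαsm : ∀ y : Fin n → ℝ, y ≠ 0 →
      ContDiffAt ℝ 4 (fun v : Fin n → ℝ => Real.sqrt (v ⬝ᵥ A *ᵥ v)) y := by
    intro y hy
    exact (Real.contDiffAt_sqrt (ne_of_gt (hqpos y hy))).comp y (contDiff_quadForm A).contDiffAt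
  have hHsm : ∀ y : Fin n → ℝ, y ≠ 0 → ContDiffAt ℝ 4 Hf y := by
    intro y hy
    exact ((contDiff_dotProduct L).contDiffAt).mul (hαsm y hy)
  have hQsm : ContDiff ℝ 4 Qf :=
    ((contDiff_dotProduct c₀).mul (contDiff_dotProduct b)).add
      (contDiff_const.mul ((contDiff_quadForm A).add ((contDiff_dotProduct b).pow 2)))
  have hGsm : ∀ y : Fin n → ℝ, y ≠ 0 → ContDiffAt ℝ 4 G y := by
    intro y hy
    exact ((contDiff_dotProduct c₀).contDiffAt.mul
        ((hαsm y hy).add (contDiff_dotProduct b).contDiffAt)).add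
      (contDiffAt_const.mul (((hαsm y hy).add (contDiff_dotProduct b).contDiffAt).pow 2))
  -- differentiating once reduces smoothness by one
  have hD1 : ∀ (f : (Fin n → ℝ) → ℝ) (m : ℕ), (∀ y : Fin n → ℝ, y ≠ 0 →
      ContDiffAt ℝ (m + 1) f y) → ∀ (l : Fin n) (y : Fin n → ℝ), y ≠ 0 →
      ContDiffAt ℝ m (fun w => fderiv ℝ f w (Pi.single l 1)) y := by
    intro f m hf l y hy
    have h1 : ContDiffAt ℝ m (fderiv ℝ f) y :=
      (hf y hy).fderiv_right (by exact_mod_cast le_refl (m + 1))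
    exact h1.clm_apply contDiffAt_const
  have hD1' : ∀ (f : (Fin n → ℝ) → ℝ) (m : ℕ), ContDiff ℝ (m + 1) f →
      ∀ l : Fin n, ContDiff ℝ m (fun w => fderiv ℝ f w (Pi.single l 1)) := by
    intro f m hf l
    exact (hf.fderiv_right (by exact_mod_cast le_refl (m + 1))).clm_apply contDiff_const
  have hopen : IsOpen ({(0 : Fin n → ℝ)}ᶜ) := isOpen_compl_singleton
  have hconn : IsPreconnected ({(0 : Fin n → ℝ)}ᶜ) := by
    have hrank : 1 < Module.rank ℝ (Fin n → ℝ) := by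
      rw [rank_fin_fun]
      exact_mod_cast (by omega : 1 < n)
    exact (isConnected_compl_singleton_of_one_lt_rank hrank 0).isPreconnected
  have hmem : ∀ {y : Fin n → ℝ}, y ≠ 0 → ({(0 : Fin n → ℝ)}ᶜ) ∈ nhds y := by
    intro y hy
    exact hopen.mem_nhds (by simpa using hy)
  have hconst : ∀ g : (Fin n → ℝ) → ℝ, (∀ x : Fin n → ℝ, x ≠ 0 → DifferentiableAt ℝ g x) →
      (∀ x : Fin n → ℝ, x ≠ 0 → fderiv ℝ g x = 0) →
      ∀ x y : Fin n → ℝ, x ≠ 0 → y ≠ 0 → g x = g y := by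
    intro g hd hz x y hx hy
    exact const_of_fderiv_zero_on hopen hconn
      (fun u hu => hd u (by simpa using hu)) (fun u hu => hz u (by simpa using hu))
      (by simpa using hx) (by simpa using hy)
  -- first-level split of derivatives
  have hfder1 : ∀ (w : Fin n → ℝ), w ≠ 0 →
      fderiv ℝ G w = fderiv ℝ Hf w + fderiv ℝ Qf w := by
    intro w hw
    have hfe : G = fun v => Hf v + Qf v := funext hsplit
    rw [hfe, fderiv_fun_add ((hHsm w hw).differentiableAt (by norm_num))
      (hQsm.differentiable (by norm_num)).differentiableAt]
  -- second-level split
  have hg2split : ∀ (y : Fin n → ℝ), y ≠ 0 → ∀ k l : Fin n,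
      fderiv ℝ (fun w => fderiv ℝ G w (Pi.single l 1)) y (Pi.single k 1) =
        fderiv ℝ (fun w => fderiv ℝ Hf w (Pi.single l 1)) y (Pi.single k 1) +
          fderiv ℝ (fun w => fderiv ℝ Qf w (Pi.single l 1)) y (Pi.single k 1) := by
    intro y hy k l
    have hev : (fun w => fderiv ℝ G w (Pi.single l 1)) =ᶠ[nhds y]
        (fun w => fderiv ℝ Hf w (Pi.single l 1) + fderiv ℝ Qf w (Pi.single l 1)) := by
      filter_upwards [hmem hy] with w hw
      rw [hfder1 w (by simpa using hw)]
      rfl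
    rw [hev.fderiv_eq, fderiv_fun_add
      ((hD1 Hf 3 (fun z hz => hHsm z hz) l y hy).differentiableAt (by norm_num))
      ((hD1' Qf 3 hQsm l).differentiable (by norm_num)).differentiableAt]
    rfl
  -- the hypothesis gives vanishing third derivative of G, hence second derivatives
  -- of G are constant on the connected set of nonzero vectors
  have hg2G_const : ∀ k l : Fin n, ∀ y : Fin n → ℝ, y ≠ 0 →
      fderiv ℝ (fun w => fderiv ℝ G w (Pi.single l 1)) y (Pi.single k 1) =
        fderiv ℝ (fun w => fderiv ℝ G w (Pi.single l 1)) (-y) (Pi.single k 1) := by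
    intro k l y hy
    refine hconst (fun z => fderiv ℝ (fun w => fderiv ℝ G w (Pi.single l 1)) z (Pi.single k 1))
      ?_ ?_ y (-y) hy (neg_ne_zero.mpr hy)
    · intro x hx
      exact (hD1 (fun w => fderiv ℝ G w (Pi.single l 1)) 2
        (fun z hz => hD1 G 3 (fun u hu => hGsm u hu) l z hz) k x hx).differentiableAt
        (by norm_num)
    · intro x hx
      exact clm_zero_of_single _ (fun j => h x hx j k l)
  -- parity facts
  have hQeven : ∀ v, Qf (-v) = Qf v := by
    intro v
    simp only [hQf, Matrix.mulVec_neg, dotProduct_neg, neg_dotProduct, neg_neg]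
    ring
  have hHodd : ∀ v, Hf (-v) = -Hf v := by
    intro v
    simp only [hHf, Matrix.mulVec_neg, dotProduct_neg, neg_dotProduct, neg_neg]
    ring
  -- derivative parity for Qf (everywhere)
  have hQd1 : ∀ y : Fin n → ℝ, fderiv ℝ Qf y = -(fderiv ℝ Qf (-y)) := by
    intro y
    exact fderiv_even_eq' (Filter.Eventually.of_forall hQeven)
      ((hQsm.differentiable (by norm_num)) (-y))
  have hQg1odd : ∀ (l : Fin n) (w : Fin n → ℝ),
      fderiv ℝ Qf (-w) (Pi.single l 1) = -(fderiv ℝ Qf w (Pi.single l 1)) := by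
    intro l w
    have := hQd1 w
    rw [this]
    simp
  have hQg2even : ∀ (k l : Fin n) (y : Fin n → ℝ),
      fderiv ℝ (fun w => fderiv ℝ Qf w (Pi.single l 1)) y (Pi.single k 1) =
        fderiv ℝ (fun w => fderiv ℝ Qf w (Pi.single l 1)) (-y) (Pi.single k 1) := by
    intro k l y
    have hodd : (fun w => (fun z => fderiv ℝ Qf z (Pi.single l 1)) (-w)) =ᶠ[nhds y]
        (fun w => -((fun z => fderiv ℝ Qf z (Pi.single l 1)) w)) :=
      Filter.Eventually.of_forall (fun w => hQg1odd l w)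
    have := fderiv_odd_eq' hodd
      (((hD1' Qf 3 hQsm l).differentiable (by norm_num)) (-y))
    rw [this]
  -- derivative parity for Hf (away from zero)
  have hHg1even : ∀ (w : Fin n → ℝ), w ≠ 0 → fderiv ℝ Hf w = fderiv ℝ Hf (-w) := by
    intro w hw
    exact fderiv_odd_eq' (Filter.Eventually.of_forall hHodd)
      ((hHsm (-w) (neg_ne_zero.mpr hw)).differentiableAt (by norm_num))
  have hHg2odd : ∀ (k l : Fin n) (y : Fin n → ℝ), y ≠ 0 →
      fderiv ℝ (fun w => fderiv ℝ Hf w (Pi.single l 1)) y (Pi.single k 1) =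
        -(fderiv ℝ (fun w => fderiv ℝ Hf w (Pi.single l 1)) (-y) (Pi.single k 1)) := by
    intro k l y hy
    have heven : (fun w => (fun z => fderiv ℝ Hf z (Pi.single l 1)) (-w)) =ᶠ[nhds y]
        (fun z => fderiv ℝ Hf z (Pi.single l 1)) := by
      filter_upwards [hmem hy] with w hw
      have hw' : w ≠ 0 := by simpa using hw
      rw [← hHg1even w hw']
    have := fderiv_even_eq' heven
      ((hD1 Hf 3 (fun z hz => hHsm z hz) l (-y) (neg_ne_zero.mpr hy)).differentiableAt
        (by norm_num))
    rw [this]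
    simp
  -- conclude: second derivatives of Hf vanish away from zero
  have hHg2zero : ∀ (k l : Fin n) (y : Fin n → ℝ), y ≠ 0 →
      fderiv ℝ (fun w => fderiv ℝ Hf w (Pi.single l 1)) y (Pi.single k 1) = 0 := by
    intro k l y hy
    have h1 := hg2split y hy k l
    have h2 := hg2split (-y) (neg_ne_zero.mpr hy) k l
    have h3 := hg2G_const k l y hy
    have h4 := hHg2odd k l y hy
    have h5 := hQg2even k l y
    -- h1 : G'' y = H'' y + Q'' y ; h2 : G'' (-y) = H''(-y) + Q''(-y)
    -- h3 : G'' y = G'' (-y) ; h4 : H'' y = -H''(-y) ; h5 : Q'' y = Q''(-y)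
    linarith [h1, h2, h3, h4, h5]
  -- first derivatives of Hf are constant away from zero
  have npos : 0 < n := by omega
  set v₀ : Fin n → ℝ := Pi.single ⟨0, npos⟩ 1 with hv₀
  have hv₀ne : v₀ ≠ 0 := by
    intro hcontra
    have : v₀ ⟨0, npos⟩ = 0 := by rw [hcontra]; rfl
    simp [hv₀] at this
  set M : Fin n → ℝ := fun l => fderiv ℝ Hf v₀ (Pi.single l 1) with hM
  have hHg1const : ∀ (l : Fin n) (y : Fin n → ℝ), y ≠ 0 →
      fderiv ℝ Hf y (Pi.single l 1) = M l := by
    intro l y hy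
    exact hconst (fun w => fderiv ℝ Hf w (Pi.single l 1))
      (fun x hx => (hD1 Hf 3 (fun z hz => hHsm z hz) l x hx).differentiableAt (by norm_num))
      (fun x hx => clm_zero_of_single _ (fun k => hHg2zero k l x hx)) y v₀ hy hv₀ne
  -- Hf is affine away from zero
  set Dm : (Fin n → ℝ) →L[ℝ] ℝ := ∑ l, M l • ContinuousLinearMap.proj l with hDm
  have hDmval : ∀ v, Dm v = M ⬝ᵥ v := by
    intro v
    simp [hDm, dotProduct, ContinuousLinearMap.sum_apply]
  have hDmfd : ∀ y : Fin n → ℝ, HasFDerivAt (fun v : Fin n → ℝ => M ⬝ᵥ v) Dm y := by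
    intro y
    have := Dm.hasFDerivAt (x := y)
    have hfe : ⇑Dm = fun v : Fin n → ℝ => M ⬝ᵥ v := funext hDmval
    rwa [hfe] at this
  have hpsi : ∀ y : Fin n → ℝ, y ≠ 0 → Hf y - M ⬝ᵥ y = Hf v₀ - M ⬝ᵥ v₀ := by
    intro y hy
    refine hconst (fun w => Hf w - M ⬝ᵥ w) ?_ ?_ y v₀ hy hv₀ne
    · intro x hx
      exact ((hHsm x hx).differentiableAt (by norm_num)).sub (hDmfd x).differentiableAt
    · intro x hx
      have hd : fderiv ℝ (fun w => Hf w - M ⬝ᵥ w) x = fderiv ℝ Hf x - Dm := by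
        rw [fderiv_fun_sub ((hHsm x hx).differentiableAt (by norm_num))
          (hDmfd x).differentiableAt, (hDmfd x).fderiv]
      rw [hd]
      apply clm_zero_of_single
      intro i
      have h1 : fderiv ℝ Hf x (Pi.single i 1) = M i := hHg1const i x hx
      have h2 : Dm (Pi.single i 1) = M i := by
        rw [hDmval]
        simp [dotProduct_single]
      simp [h1, h2]
  set C : ℝ := Hf v₀ - M ⬝ᵥ v₀ with hC
  -- use oddness of Hf to kill the constant
  have hCzero : C = 0 := by
    have h1 := hpsi v₀ hv₀ne
    have h2 := hpsi (-v₀) (neg_ne_zero.mpr hv₀ne)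
    rw [hHodd v₀] at h2
    have h3 : M ⬝ᵥ (-v₀) = -(M ⬝ᵥ v₀) := by simp
    rw [h3] at h2
    have := hC
    linarith [h1, h2]
  have hHaff : ∀ y : Fin n → ℝ, y ≠ 0 → Hf y = M ⬝ᵥ y := by
    intro y hy
    have := hpsi y hy
    rw [hCzero] at this
    linarith
  -- scaling argument: Hf is homogeneous of degree 2, M⬝ᵥ· of degree 1
  have hMzero : ∀ y : Fin n → ℝ, y ≠ 0 → M ⬝ᵥ y = 0 := by
    intro y hy
    have h2y : (2 : ℝ) • y ≠ 0 := smul_ne_zero two_ne_zero hy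
    have hq2 : ((2 : ℝ) • y) ⬝ᵥ A *ᵥ ((2 : ℝ) • y) = 4 * (y ⬝ᵥ A *ᵥ y) := by
      rw [Matrix.mulVec_smul, smul_dotProduct, dotProduct_smul]
      simp [smul_eq_mul]
      ring
    have hsq2 : Real.sqrt (((2 : ℝ) • y) ⬝ᵥ A *ᵥ ((2 : ℝ) • y)) =
        2 * Real.sqrt (y ⬝ᵥ A *ᵥ y) := by
      rw [hq2]
      rw [show (4 : ℝ) * (y ⬝ᵥ A *ᵥ y) = (2 : ℝ) ^ 2 * (y ⬝ᵥ A *ᵥ y) by ring]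
      rw [Real.sqrt_mul (by positivity) _, Real.sqrt_sq (by norm_num : (0:ℝ) ≤ 2)]
    have hL2 : L ⬝ᵥ ((2 : ℝ) • y) = 2 * (L ⬝ᵥ y) := by
      rw [dotProduct_smul]; simp [smul_eq_mul]
    have hM2 : M ⬝ᵥ ((2 : ℝ) • y) = 2 * (M ⬝ᵥ y) := by
      rw [dotProduct_smul]; simp [smul_eq_mul]
    have e1 : Hf ((2 : ℝ) • y) = 4 * Hf y := by
      simp only [hHf]
      rw [hL2, hsq2]
      ring
    have e2 := hHaff ((2 : ℝ) • y) h2y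
    have e3 := hHaff y hy
    rw [e1, e3, hM2] at e2
    linarith
  have hHzero : ∀ y : Fin n → ℝ, y ≠ 0 → L ⬝ᵥ y = 0 := by
    intro y hy
    have h1 : Hf y = 0 := by rw [hHaff y hy, hMzero y hy]
    have h2 : (L ⬝ᵥ y) * Real.sqrt (y ⬝ᵥ A *ᵥ y) = 0 := h1
    have h3 : Real.sqrt (y ⬝ᵥ A *ᵥ y) ≠ 0 :=
      ne_of_gt (Real.sqrt_pos.mpr (hqpos y hy))
    exact (mul_eq_zero.mp h2).resolve_right h3
  have hmain : ∀ y : Fin n → ℝ, c₀ ⬝ᵥ y = -2 * c ^ 2 * (b ⬝ᵥ y) := by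
    intro y
    rcases eq_or_ne y 0 with rfl | hy
    · simp
    · have := hHzero y hy
      rw [hLdot y] at this
      linarith
  refine ⟨hmain, ?_⟩
  intro hc₀ hb
  obtain ⟨i, hi⟩ := Function.ne_iff.mp hb
  have h1 := hmain (Pi.single i 1)
  rw [hc₀ (Pi.single i 1)] at h1
  have h2 : b ⬝ᵥ Pi.single i 1 = b i := by simp [dotProduct_single]
  rw [h2] at h1
  have hbine : b i ≠ 0 := by simpa using hi
  have hc2 : c ^ 2 = 0 := by
    by_contra hcc
    have : (-2 : ℝ) * c ^ 2 * b i ≠ 0 := by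
      apply mul_ne_zero (mul_ne_zero (by norm_num) hcc) hbine
    exact this h1.symm
  exact pow_eq_zero_iff (by norm_num) |>.mp hc2
end

section
/- Let n ≥ 1, let A be a symmetric positive definite real n×n matrix, and let b ∈ ℝⁿ satisfy bᵀA⁻¹b < 1. Set α(y) = √(yᵀAy), β(y) = ∑_i b_i y_i, and F = α + β. Then for every y ≠ 0 in ℝⁿ, the symmetric bilinear form g_y(u, v) = (1/2)·D²(F²)(y)[u, v] (one half of the second Fréchet derivative of F² at y) is positive definite on ℝⁿ. -/
open Matrix


theorem exists_B {n : ℕ} (A : Matrix (Fin n) (Fin n) ℝ) :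
    ∃ B : (Fin n → ℝ) →L[ℝ] (Fin n → ℝ) →L[ℝ] ℝ, ∀ x y, B x y = x ⬝ᵥ A *ᵥ y := by
  let L : (Fin n → ℝ) →ₗ[ℝ] (Fin n → ℝ) →ₗ[ℝ] ℝ :=
    LinearMap.mk₂ ℝ (fun x y => x ⬝ᵥ A *ᵥ y)
      (fun x x' y => by simp [add_dotProduct])
      (fun c x y => by simp [smul_dotProduct])
      (fun x y y' => by simp [Matrix.mulVec_add, dotProduct_add])
      (fun c x y => by simp [Matrix.mulVec_smul, dotProduct_smul])
  refine ⟨LinearMap.toContinuousLinearMap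
    { toFun := fun x => LinearMap.toContinuousLinearMap (L x),
      map_add' := fun x x' => by ext y; simp,
      map_smul' := fun c x => by ext y; simp }, fun x y => by simp [L]⟩

set_option maxHeartbeats 1000000 in
/-- Under the condition `bᵀA⁻¹b < 1`, the fundamental tensor of the Randers-type function
`F = α + β`, i.e. one half of the second Fréchet derivative of `F²`, is positive definite
at every `y ≠ 0`. -/
theorem stmt_16 (n : ℕ) (hn : 1 ≤ n) (A : Matrix (Fin n) (Fin n) ℝ) (hA : A.PosDef)
    (b : Fin n → ℝ) (hb : b ⬝ᵥ A⁻¹ *ᵥ b < 1)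
    (y : Fin n → ℝ) (hy : y ≠ 0) :
    ∀ u : Fin n → ℝ, u ≠ 0 →
      0 < (1 / 2 : ℝ) *
        fderiv ℝ (fun z : Fin n → ℝ =>
            fderiv ℝ (fun w : Fin n → ℝ =>
                (Real.sqrt (w ⬝ᵥ A *ᵥ w) + b ⬝ᵥ w) ^ 2) z u)
          y u := by
  intro u hu
  obtain ⟨B, hB⟩ := exists_B A
  obtain ⟨B₁, hB₁'⟩ := exists_B (1 : Matrix (Fin n) (Fin n) ℝ)
  have hB₁ : ∀ x w : Fin n → ℝ, B₁ x w = x ⬝ᵥ w := by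
    intro x w; rw [hB₁', Matrix.one_mulVec]
  have hentry : ∀ i j, A i j = A j i := by
    intro i j
    have := congrFun (congrFun hA.1 i) j
    simpa [Matrix.conjTranspose_apply] using this.symm
  have hsym : ∀ x w : Fin n → ℝ, x ⬝ᵥ A *ᵥ w = w ⬝ᵥ A *ᵥ x := by
    intro x w
    simp only [dotProduct, Matrix.mulVec, Finset.mul_sum]
    rw [Finset.sum_comm]
    exact Finset.sum_congr rfl fun i _ => Finset.sum_congr rfl fun j _ => by
      rw [hentry j i]; ring
  have hBsym : ∀ x w : Fin n → ℝ, B x w = B w x := fun x w => by rw [hB, hB, hsym]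
  have hq_pos : ∀ z : Fin n → ℝ, z ≠ 0 → 0 < B z z := by
    intro z hz
    rw [hB]
    simpa using hA.dotProduct_mulVec_pos hz
  have hq_nonneg : ∀ z : Fin n → ℝ, 0 ≤ B z z := by
    intro z
    rcases eq_or_ne z 0 with h | h
    · simp [h]
    · exact le_of_lt (hq_pos z h)
  -- derivative of the quadratic form
  have hq_deriv : ∀ z : Fin n → ℝ, HasFDerivAt (fun w => B w w) ((2:ℝ) • B z) z := by
    intro z
    have h := B.hasFDerivAt_of_bilinear (hasFDerivAt_id z) (hasFDerivAt_id z)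
    refine h.congr_fderiv ?_
    ext v
    simp [ContinuousLinearMap.precompR, ContinuousLinearMap.precompL, hBsym z v, two_mul]
  have hα_deriv : ∀ z : Fin n → ℝ, z ≠ 0 →
      HasFDerivAt (fun w => Real.sqrt (B w w))
        ((1 / (2 * Real.sqrt (B z z))) • ((2:ℝ) • B z)) z := by
    intro z hz
    exact (hq_deriv z).sqrt (ne_of_gt (hq_pos z hz))
  have hβ_deriv : ∀ z : Fin n → ℝ, HasFDerivAt (fun w : Fin n → ℝ => b ⬝ᵥ w) (B₁ b) z := by
    intro z
    have h : (fun w : Fin n → ℝ => b ⬝ᵥ w) = ⇑(B₁ b) := funext fun w => (hB₁ b w).symm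
    rw [h]
    exact (B₁ b).hasFDerivAt
  -- step 1 : inner fderiv formula
  have key1 : ∀ z : Fin n → ℝ, z ≠ 0 →
      fderiv ℝ (fun w : Fin n → ℝ =>
        (Real.sqrt (w ⬝ᵥ A *ᵥ w) + b ⬝ᵥ w) ^ 2) z u =
      2 * (Real.sqrt (B z z) + b ⬝ᵥ z) * ((Real.sqrt (B z z))⁻¹ * B z u + b ⬝ᵥ u) := by
    intro z hz
    have hfun : (fun w : Fin n → ℝ => (Real.sqrt (w ⬝ᵥ A *ᵥ w) + b ⬝ᵥ w) ^ 2)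
        = fun w => (Real.sqrt (B w w) + b ⬝ᵥ w) ^ 2 := by
      funext w; rw [hB]
    rw [hfun]
    have hF := (hα_deriv z hz).add (hβ_deriv z)
    have hF2 := hF.mul hF
    simp only [← pow_two] at hF2
    rw [show (fun w : Fin n → ℝ => (Real.sqrt (B w w) + b ⬝ᵥ w) ^ 2) = ((fun w => Real.sqrt (B w w)) + fun w => b ⬝ᵥ w) ^ 2 from rfl, hF2.fderiv]
    have hs : Real.sqrt (B z z) ≠ 0 := ne_of_gt (Real.sqrt_pos.mpr (hq_pos z hz))
    simp only [ContinuousLinearMap.add_apply, ContinuousLinearMap.smul_apply,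
      smul_eq_mul, hB₁, Pi.add_apply]
    field_simp
    ring
  -- step 2 : replace outer function
  have key2 : (fun z => fderiv ℝ (fun w : Fin n → ℝ =>
        (Real.sqrt (w ⬝ᵥ A *ᵥ w) + b ⬝ᵥ w) ^ 2) z u) =ᶠ[nhds y]
      (fun z => 2 * (Real.sqrt (B z z) + b ⬝ᵥ z) *
        ((Real.sqrt (B z z))⁻¹ * B z u + b ⬝ᵥ u)) := by
    filter_upwards [eventually_ne_nhds hy] with z hz using key1 z hz
  rw [key2.fderiv_eq]
  -- step 3 : differentiate G
  have hαy := hα_deriv y hy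
  have hsy : Real.sqrt (B y y) ≠ 0 := ne_of_gt (Real.sqrt_pos.mpr (hq_pos y hy))
  have hflip : HasFDerivAt (fun z => B z u) (B.flip u) y := by
    have h : (fun z => B z u) = ⇑(B.flip u) := funext fun z => rfl
    rw [h]; exact (B.flip u).hasFDerivAt
  have hinv : HasFDerivAt (fun z => (Real.sqrt (B z z))⁻¹)
      ((-(Real.sqrt (B y y) ^ 2)⁻¹) • ((1 / (2 * Real.sqrt (B y y))) • ((2:ℝ) • B y))) y :=
    (hasDerivAt_inv hsy).comp_hasFDerivAt y hαy
  have hG1 : HasFDerivAt (fun z => 2 * (Real.sqrt (B z z) + b ⬝ᵥ z))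
      ((2:ℝ) • ((1 / (2 * Real.sqrt (B y y))) • ((2:ℝ) • B y) + B₁ b)) y :=
    (hαy.add (hβ_deriv y)).const_mul 2
  have hG2 := (hinv.mul hflip).add_const (b ⬝ᵥ u)
  have hG := hG1.mul hG2
  rw [show (fun z : Fin n → ℝ => 2 * (Real.sqrt (B z z) + b ⬝ᵥ z) * ((Real.sqrt (B z z))⁻¹ * B z u + b ⬝ᵥ u)) = ((fun z => 2 * (Real.sqrt (B z z) + b ⬝ᵥ z)) * fun x => ((fun z => (Real.sqrt (B z z))⁻¹) * fun z => B z u) x + b ⬝ᵥ u) from rfl, hG.fderiv]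
  simp only [ContinuousLinearMap.add_apply, ContinuousLinearMap.smul_apply,
    smul_eq_mul, hB₁, Pi.mul_apply]
  rw [ContinuousLinearMap.flip_apply]
  -- abbreviations
  have hqy := hq_pos y hy
  have hqu := hq_pos u hu
  set a := Real.sqrt (B y y) with ha_def
  have ha : 0 < a := Real.sqrt_pos.mpr hqy
  have ha2 : a ^ 2 = B y y := Real.sq_sqrt (hq_nonneg y)
  -- Cauchy-Schwarz for B
  have CS : ∀ x z : Fin n → ℝ, (B x z) ^ 2 ≤ B x x * B z z := by
    intro x z
    rcases eq_or_ne z 0 with rfl | hz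
    · simp
    · have hzz := hq_pos z hz
      have h := hq_nonneg (B z z • x - B x z • z)
      simp only [map_sub, _root_.map_smul, ContinuousLinearMap.sub_apply,
        ContinuousLinearMap.smul_apply, smul_eq_mul, hBsym z x] at h
      nlinarith [h, hzz]
  -- positivity of a + b ⬝ᵥ y
  have haβ : 0 < a + b ⬝ᵥ y := by
    have hdet : IsUnit A.det := (Matrix.isUnit_iff_isUnit_det A).mp hA.isUnit
    have hAw : A *ᵥ (A⁻¹ *ᵥ b) = b := by
      rw [Matrix.mulVec_mulVec, Matrix.mul_nonsing_inv A hdet, Matrix.one_mulVec]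
    have hww : B (A⁻¹ *ᵥ b) (A⁻¹ *ᵥ b) < 1 := by
      rw [hB, hAw]
      rwa [dotProduct_comm] at hb
    have hby : b ⬝ᵥ y = B y (A⁻¹ *ᵥ b) := by
      rw [hB, hAw, dotProduct_comm]
    have hcs := CS y (A⁻¹ *ᵥ b)
    have hw0 : 0 ≤ B (A⁻¹ *ᵥ b) (A⁻¹ *ᵥ b) := hq_nonneg _
    have hlt : (b ⬝ᵥ y) ^ 2 < a ^ 2 := by
      rw [hby, ha2]
      nlinarith [hqy]
    nlinarith [ha, hlt]
  -- the rewriting of the quadratic form along v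
  have hv : B (u - (B y u / B y y) • y) (u - (B y u / B y y) • y)
      = B u u - (B y u) ^ 2 / (B y y) := by
    simp only [map_sub, _root_.map_smul, ContinuousLinearMap.sub_apply,
      ContinuousLinearMap.smul_apply, smul_eq_mul, hBsym u y]
    field_simp
    ring
  have key : (1 / 2 : ℝ) *
      (2 * (a + b ⬝ᵥ y) *
          (a⁻¹ * B u u + B y u * (-(a ^ 2)⁻¹ * (1 / (2 * a) * (2 * B y u)))) +
        (a⁻¹ * B y u + b ⬝ᵥ u) * (2 * (1 / (2 * a) * (2 * B y u) + b ⬝ᵥ u)))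
      = (B y u / a + b ⬝ᵥ u) ^ 2 + ((a + b ⬝ᵥ y) / a) * (B u u - (B y u) ^ 2 / (B y y)) := by
    rw [← ha2]
    field_simp
    ring
  rw [key]
  have hvnn : 0 ≤ B u u - (B y u) ^ 2 / B y y := by rw [← hv]; exact hq_nonneg _
  rcases eq_or_lt_of_le hvnn with heq | hlt
  · -- degenerate case : u is proportional to y
    have hv0 : B (u - (B y u / B y y) • y) (u - (B y u / B y y) • y) = 0 := by
      rw [hv, ← heq]
    have hveq : u - (B y u / B y y) • y = 0 := by
      by_contra h
      exact (ne_of_gt (hq_pos _ h)) hv0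
    have huy : u = (B y u / B y y) • y := by
      have := sub_eq_zero.mp hveq
      exact this
    have hlam : B y u / B y y ≠ 0 := by
      intro h0
      rw [h0, zero_smul] at huy
      exact hu huy
    have hc : b ⬝ᵥ u = (B y u / B y y) * (b ⬝ᵥ y) := by
      conv_lhs => rw [huy]
      simp [dotProduct_smul, smul_eq_mul]
    have ht : B y u / a = (B y u / B y y) * a := by
      rw [← ha2]; field_simp
    have hne : B y u / a + b ⬝ᵥ u ≠ 0 := by
      rw [hc, ht, ← mul_add]
      exact mul_ne_zero hlam (ne_of_gt haβ)
    have h1 : 0 < (B y u / a + b ⬝ᵥ u) ^ 2 :=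
      lt_of_le_of_ne (sq_nonneg _) (Ne.symm (pow_ne_zero 2 hne))
    rw [← heq]
    simpa using h1
  · have h2 : 0 < ((a + b ⬝ᵥ y) / a) * (B u u - (B y u) ^ 2 / B y y) :=
      mul_pos (div_pos haβ ha) hlt
    exact add_pos_of_nonneg_of_pos (sq_nonneg _) h2
end
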